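/- For all real s: σ(s)·σ(−s) ≤ (2/(3√3))·√(log(1 + e^{−s})), where σ(t) = 1/(1+e^{−t}). -/

import Mathlib

/-- scalar logistic bound
`σ(s)σ(−s) ≤ (2/(3√3))√(log(1 + e^{−s}))` where `σ(t) = 1/(1+e^{−t})`. -/
theorem sigmoid_product_le_sqrt_log (σ : ℝ → ℝ)
    (hσ : ∀ t, σ t = 1 / (1 + Real.exp (-t))) :
    ∀ s : ℝ, σ s * σ (-s)
      ≤ (2 / (3 * Real.sqrt 3)) * Real.sqrt (Real.log (1 + Real.exp (-s))) := by
  intro s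
  rw [hσ, hσ]
  set x := Real.exp (-s) with hxdef
  have hx : 0 < x := Real.exp_pos _
  have h1x : 0 < 1 + x := by linarith
  have hns : Real.exp (-(-s)) = 1 / x := by
    rw [neg_neg, hxdef, Real.exp_neg, one_div, inv_inv]
  have hprod : 1 / (1 + x) * (1 / (1 + Real.exp (-(-s)))) = x / (1 + x) ^ 2 := by
    rw [hns]
    rw [show (1:ℝ) + 1 / x = (x + 1) / x by rw [add_div, div_self hx.ne']]
    field_simp
    ring
  rw [hprod]
  have hc3 : (0:ℝ) < Real.sqrt 3 := Real.sqrt_pos.2 (by norm_num)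
  have hcpos : (0:ℝ) < 2 / (3 * Real.sqrt 3) := by positivity
  -- log bound
  have hlog : x / (1 + x) ≤ Real.log (1 + x) := by
    have h := Real.log_le_sub_one_of_pos (show 0 < (1 + x)⁻¹ by positivity)
    rw [Real.log_inv] at h
    have hx1 : x / (1 + x) = 1 - (1 + x)⁻¹ := by field_simp; ring
    linarith
  -- key algebraic inequality
  have key : x / (1 + x) ^ 2 ≤ 2 / (3 * Real.sqrt 3) * Real.sqrt (x / (1 + x)) := by
    have hrw : 2 / (3 * Real.sqrt 3) * Real.sqrt (x / (1 + x))
        = Real.sqrt (4 / 27 * (x / (1 + x))) := by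
      rw [Real.sqrt_mul (by norm_num : (0:ℝ) ≤ 4/27)]
      congr 1
      rw [show (4:ℝ)/27 = (2 / (3 * Real.sqrt 3))^2 by
        rw [div_pow, mul_pow, Real.sq_sqrt (by norm_num : (0:ℝ) ≤ 3)]; norm_num]
      exact (Real.sqrt_sq hcpos.le).symm
    rw [hrw]
    rw [show x / (1 + x) ^ 2 = Real.sqrt ((x / (1 + x) ^ 2) ^ 2) from
      (Real.sqrt_sq (by positivity)).symm]
    apply Real.sqrt_le_sqrt
    rw [show (4:ℝ) / 27 * (x / (1 + x)) = 4 * x / (27 * (1 + x)) by field_simp]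
    rw [div_pow, div_le_div_iff₀ (by positivity) (by positivity)]
    have hfact : 0 ≤ x * (1 + x) * (2 * x - 1) ^ 2 * (x + 4) := by positivity
    nlinarith [hfact, sq_nonneg x, sq_nonneg (1 + x)]
  calc x / (1 + x) ^ 2 ≤ 2 / (3 * Real.sqrt 3) * Real.sqrt (x / (1 + x)) := key
    _ ≤ 2 / (3 * Real.sqrt 3) * Real.sqrt (Real.log (1 + x)) := by
        exact mul_le_mul_of_nonneg_left (Real.sqrt_le_sqrt hlog) hcpos.le
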